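/- Let X = (y, U, H) ∈ F₀ with ‖H‖_{L^∞} ≤ M. Then there exists a constant M̄ depending only on M such that ‖X‖_E = ‖y - id‖_V + ‖U‖_{H¹} + ‖H‖_V ≤ M̄. In particular F₀ ∩ B_M ⊂ F₀ᴹ ⊂ B_{M̄}. -/

import Mathlib

open MeasureTheory

/-- `(y,U,H) ∈ F₀`: here `F₀` also includes the normalization `y + H = id`
(relabeling by `(y+H)⁻¹`), so that `ζ = y - id = -H`. -/
def InF0 (y U H : ℝ → ℝ) : Prop :=
  (∃ K : NNReal, LipschitzWith K y) ∧ (∃ K : NNReal, LipschitzWith K U) ∧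
  (∃ K : NNReal, LipschitzWith K H) ∧
  (∃ C : ℝ, ∀ x, |y x - x| ≤ C) ∧ (∃ C : ℝ, ∀ x, |H x| ≤ C) ∧
  MemLp (fun x => deriv y x - 1) 2 (volume : Measure ℝ) ∧
  MemLp (deriv H) 2 (volume : Measure ℝ) ∧
  MemLp U 2 (volume : Measure ℝ) ∧
  MemLp (deriv U) 2 (volume : Measure ℝ) ∧
  (∀ᵐ ξ ∂(volume : Measure ℝ),
    0 ≤ deriv y ξ ∧ 0 ≤ deriv H ξ ∧ deriv y ξ + deriv H ξ = 1 ∧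
    deriv y ξ * deriv H ξ = (deriv y ξ) ^ 2 * (U ξ) ^ 2 + (deriv U ξ) ^ 2) ∧
  Filter.Tendsto H Filter.atBot (nhds 0) ∧
  (∀ ξ, y ξ + H ξ = ξ)

/-- The `V`-norm `‖g‖_V = ‖g‖_{L^∞} + ‖g'‖_{L²}`. -/
noncomputable def Vnorm (g : ℝ → ℝ) : ℝ :=
  (⨆ x : ℝ, |g x|) + (∫ x : ℝ, (deriv g x) ^ 2) ^ (1/2 : ℝ)

/-- The `H¹`-norm. -/
noncomputable def H1norm (g : ℝ → ℝ) : ℝ :=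
  (∫ x : ℝ, ((g x) ^ 2 + (deriv g x) ^ 2)) ^ (1/2 : ℝ)

/-- The `E = V × H¹ × V` norm of `X = (y,U,H)`. -/
noncomputable def Enorm (y U H : ℝ → ℝ) : ℝ :=
  Vnorm (fun x => y x - x) + H1norm U + Vnorm H

open Filter Set

lemma slope_seq_tendsto {f : ℝ → ℝ} {x : ℝ} (hf : DifferentiableAt ℝ f x) :
    Tendsto (fun n : ℕ => ((n : ℝ) + 1) * (f (x + 1 / ((n : ℝ) + 1)) - f x)) atTop
      (nhds (deriv f x)) := by
  have h := hf.hasDerivAt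
  rw [hasDerivAt_iff_tendsto_slope] at h
  have h2 : Tendsto (fun n : ℕ => x + 1 / ((n : ℝ) + 1)) atTop (nhdsWithin x {x}ᶜ) := by
    apply tendsto_nhdsWithin_of_tendsto_nhds_of_eventually_within
    · have : Tendsto (fun n : ℕ => 1 / ((n : ℝ) + 1)) atTop (nhds 0) :=
        tendsto_one_div_add_atTop_nhds_zero_nat
      simpa using tendsto_const_nhds.add this
    · filter_upwards with n
      have hp : (0 : ℝ) < 1 / ((n : ℝ) + 1) := by positivity
      simp only [Set.mem_compl_iff, Set.mem_singleton_iff]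
      intro hx
      nlinarith [hx]
  have h3 := h.comp h2
  convert h3 using 2 with n
  have hp : ((n : ℝ) + 1) ≠ 0 := by positivity
  simp only [Function.comp_apply, slope_def_field]
  field_simp
  ring

lemma lipschitz_integral_deriv {f : ℝ → ℝ} {K : NNReal} (hf : LipschitzWith K f)
    {a b : ℝ} (hab : a ≤ b) :
    ∫ x in Set.Ioc a b, deriv f x = f b - f a := by
  have cont : Continuous f := hf.continuous
  set F : ℝ → ℝ := fun u => ∫ t in a..u, f t with hF_def
  have hF : ∀ x : ℝ, HasDerivAt F (f x) x := fun x =>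
    intervalIntegral.integral_hasDerivAt_right (cont.intervalIntegrable a x)
      cont.stronglyMeasurable.stronglyMeasurableAtFilter cont.continuousAt
  set g : ℕ → ℝ → ℝ := fun n x => ((n : ℝ) + 1) * (f (x + 1 / ((n : ℝ) + 1)) - f x) with hg_def
  have key : ∀ n : ℕ, ∫ x in Set.Ioc a b, g n x =
      ((n : ℝ) + 1) * (F (b + 1 / ((n : ℝ) + 1)) - F b)
        - ((n : ℝ) + 1) * (F (a + 1 / ((n : ℝ) + 1)) - F a) := by
    intro n
    set h : ℝ := 1 / ((n : ℝ) + 1) with hh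
    have h1 : ∫ x in Set.Ioc a b, g n x = ∫ x in a..b, g n x :=
      (intervalIntegral.integral_of_le hab).symm
    have hcont2 : Continuous fun x => f (x + h) := cont.comp (continuous_id.add continuous_const)
    have h2 : ∫ x in a..b, f (x + h) = ∫ x in (a+h)..(b+h), f x :=
      intervalIntegral.integral_comp_add_right f h
    have h3 : F (b+h) - F (a+h) = ∫ x in (a+h)..(b+h), f x :=
      intervalIntegral.integral_interval_sub_left (cont.intervalIntegrable _ _)
        (cont.intervalIntegrable _ _)
    have h4 : ∫ x in a..b, g n x
        = ((n : ℝ) + 1) * ((∫ x in a..b, f (x + h)) - ∫ x in a..b, f x) := by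
      rw [← intervalIntegral.integral_sub (hcont2.intervalIntegrable _ _)
        (cont.intervalIntegrable _ _), ← intervalIntegral.integral_const_mul]
    have h5 : F a = 0 := intervalIntegral.integral_same
    have h6 : (∫ x in a..b, f x) = F b := rfl
    rw [h1, h4, h2, ← h3, h6, h5]
    ring
  have lim1 : Tendsto (fun n : ℕ => ∫ x in Set.Ioc a b, g n x) atTop (nhds (f b - f a)) := by
    have tb : Tendsto (fun n : ℕ => ((n : ℝ) + 1) * (F (b + 1 / ((n : ℝ) + 1)) - F b)) atTop
        (nhds (f b)) := by
      have := slope_seq_tendsto (hF b).differentiableAt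
      rwa [(hF b).deriv] at this
    have ta : Tendsto (fun n : ℕ => ((n : ℝ) + 1) * (F (a + 1 / ((n : ℝ) + 1)) - F a)) atTop
        (nhds (f a)) := by
      have := slope_seq_tendsto (hF a).differentiableAt
      rwa [(hF a).deriv] at this
    have := tb.sub ta
    apply this.congr fun n => (key n).symm
  have lim2 : Tendsto (fun n : ℕ => ∫ x in Set.Ioc a b, g n x) atTop
      (nhds (∫ x in Set.Ioc a b, deriv f x)) := by
    apply tendsto_integral_of_dominated_convergence (fun _ => (K : ℝ))
    · intro n
      exact (Continuous.aestronglyMeasurable (by fun_prop))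
    · exact integrable_const _
    · intro n
      filter_upwards with x
      have hd := hf.dist_le_mul (x + 1 / ((n : ℝ) + 1)) x
      rw [Real.dist_eq, Real.dist_eq] at hd
      have hp : (0 : ℝ) < 1 / ((n : ℝ) + 1) := by positivity
      have hp' : ((n : ℝ) + 1) > 0 := by positivity
      have habs : |x + 1 / ((n : ℝ) + 1) - x| = 1 / ((n : ℝ) + 1) := by
        rw [add_sub_cancel_left, abs_of_pos hp]
      rw [habs] at hd
      have : ‖g n x‖ = ((n : ℝ) + 1) * |f (x + 1 / ((n : ℝ) + 1)) - f x| := by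
        rw [Real.norm_eq_abs, hg_def]
        simp only [abs_mul, abs_of_pos hp']
      rw [this]
      calc ((n : ℝ) + 1) * |f (x + 1 / ((n : ℝ) + 1)) - f x|
          ≤ ((n : ℝ) + 1) * ((K : ℝ) * (1 / ((n : ℝ) + 1))) := by
            apply mul_le_mul_of_nonneg_left hd hp'.le
        _ = (K : ℝ) := by field_simp
    · apply ae_restrict_of_ae
      filter_upwards [hf.ae_differentiableAt (μ := volume)] with x hx
      exact slope_seq_tendsto hx
  exact tendsto_nhds_unique lim2 lim1

lemma integral_le_of_Ioc {g : ℝ → ℝ} (hint : Integrable g) {C : ℝ}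
    (h : ∀ n : ℕ, ∫ x in Set.Ioc (-(n : ℝ)) (n : ℝ), g x ≤ C) : ∫ x, g x ≤ C := by
  have hmono : Monotone fun n : ℕ => Set.Ioc (-(n : ℝ)) (n : ℝ) := fun m n hmn =>
    Set.Ioc_subset_Ioc (neg_le_neg (Nat.cast_le.2 hmn)) (Nat.cast_le.2 hmn)
  have hU : (⋃ n : ℕ, Set.Ioc (-(n : ℝ)) (n : ℝ)) = Set.univ := by
    ext x
    simp only [Set.mem_iUnion, Set.mem_univ, iff_true, Set.mem_Ioc]
    obtain ⟨n, hn⟩ := exists_nat_gt |x|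
    exact ⟨n, by linarith [neg_abs_le x], by linarith [le_abs_self x]⟩
  have ht := tendsto_setIntegral_of_monotone (fun n => measurableSet_Ioc) hmono
    (by rw [hU]; exact hint.integrableOn)
  rw [hU, setIntegral_univ] at ht
  exact le_of_tendsto ht (Eventually.of_forall h)

lemma abs_two_mul_le {E u v : ℝ} (hE : 0 < E) : |2 * u * v| ≤ u ^ 2 / E + E * v ^ 2 := by
  have key : ∀ w : ℝ, 2 * u * w ≤ u ^ 2 / E + E * w ^ 2 := by
    intro w
    have h2 : 2 * u * w * E ≤ u ^ 2 + E ^ 2 * w ^ 2 := by nlinarith [sq_nonneg (u - E * w)]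
    calc 2 * u * w = 2 * u * w * E / E := by field_simp
      _ ≤ (u ^ 2 + E ^ 2 * w ^ 2) / E := by gcongr
      _ = u ^ 2 / E + E * w ^ 2 := by field_simp
  rw [abs_le]
  constructor
  · have := key (-v)
    nlinarith [this]
  · exact key v

set_option maxHeartbeats 2000000 in
/-- For any `X ∈ F₀ᴹ` (i.e. `X ∈ F₀` with `‖H‖_{L^∞} ≤ M`) there is a bound
`‖X‖_E ≤ M̄` with `M̄` depending only on `M`; in particular
`F₀ ∩ B_M ⊂ F₀ᴹ ⊂ B_{M̄}`. -/
theorem stmt10 (M : ℝ) (hM : 0 ≤ M) :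
    ∃ Mbar : ℝ,
      (∀ y U H : ℝ → ℝ, InF0 y U H → (∀ ξ, |H ξ| ≤ M) →
        Enorm y U H ≤ Mbar) ∧
      (∀ y U H : ℝ → ℝ, InF0 y U H → Enorm y U H ≤ M →
        ∀ ξ, |H ξ| ≤ M) := by
  refine ⟨2 * (M + (2*M) ^ (1/2 : ℝ))
      + (2*M*(8*M+1) + 4*M^2*(8*M+1)^2 + 2*M) ^ (1/2 : ℝ), ?_, ?_⟩
  · intro y U H hF0 hHM
    obtain ⟨⟨Ky, hyl⟩, ⟨Ku, hUl⟩, ⟨Kh, hHl⟩, ⟨Cy, hCy⟩, ⟨Ch, hCh⟩, hy2, hh2, hu2, hu'2,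
      hae, -, hsum⟩ := hF0
    set E : ℝ := 8*M + 1 with hE_def
    have hE : (0:ℝ) < E := by rw [hE_def]; linarith
    -- a.e. structural facts
    have haeQ : ∀ᵐ ξ ∂(volume : Measure ℝ),
        0 ≤ deriv H ξ ∧ deriv H ξ ≤ 1 ∧ (deriv U ξ) ^ 2 ≤ deriv H ξ ∧
          (U ξ) ^ 2 ≤ (1 + (U ξ) ^ 2) * deriv H ξ := by
      filter_upwards [hae] with ξ hξ
      obtain ⟨hy0, hH0, hsum1, hprod⟩ := hξ
      have hy1 : deriv y ξ ≤ 1 := by linarith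
      have hH1 : deriv H ξ ≤ 1 := by linarith
      have hUp : (deriv U ξ) ^ 2 ≤ deriv H ξ := by
        nlinarith [sq_nonneg (deriv y ξ * U ξ), mul_nonneg (sub_nonneg.2 hy1) hH0]
      have hkey : deriv y ξ * (U ξ) ^ 2 ≤ deriv H ξ := by
        rcases eq_or_lt_of_le hy0 with h0 | h0
        · rw [← h0]; simpa using hH0
        · have hmul : deriv y ξ * (deriv y ξ * (U ξ) ^ 2) ≤ deriv y ξ * deriv H ξ := by
            nlinarith [sq_nonneg (deriv U ξ)]
          exact le_of_mul_le_mul_left hmul h0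
      refine ⟨hH0, hH1, hUp, ?_⟩
      nlinarith [hkey]
    -- integrability
    have hH'sq_int : Integrable (fun x => (deriv H x) ^ 2) := hh2.integrable_sq
    have hU'sq_int : Integrable (fun x => (deriv U x) ^ 2) := hu'2.integrable_sq
    have hUsq_int : Integrable (fun x => (U x) ^ 2) := hu2.integrable_sq
    set a : ℝ := ∫ x, (U x) ^ 2 with ha_def
    set c : ℝ := ∫ x, (deriv U x) ^ 2 with hc_def
    have ha0 : 0 ≤ a := integral_nonneg fun x => sq_nonneg _
    have hc0 : 0 ≤ c := integral_nonneg fun x => sq_nonneg _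
    have hH'on : ∀ s t : ℝ, IntegrableOn (deriv H) (Set.Ioc s t) := by
      intro s t
      haveI : IsFiniteMeasure ((volume : Measure ℝ).restrict (Set.Ioc s t)) :=
        ⟨by rw [Measure.restrict_apply_univ]; exact measure_Ioc_lt_top⟩
      exact (hh2.restrict _).integrable one_le_two
    have hHint : ∀ n : ℕ, ∫ x in Set.Ioc (-(n : ℝ)) (n : ℝ), deriv H x ≤ 2*M := by
      intro n
      have hn : -(n : ℝ) ≤ n := by
        have : (0:ℝ) ≤ n := Nat.cast_nonneg n
        linarith
      rw [lipschitz_integral_deriv hHl hn]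
      have h1 := abs_le.1 (hHM (n : ℝ))
      have h2 := abs_le.1 (hHM (-(n : ℝ)))
      linarith [h1.2, h2.1]
    have IH2 : ∫ x, (deriv H x) ^ 2 ≤ 2*M := by
      apply integral_le_of_Ioc hH'sq_int
      intro n
      have step : ∫ x in Set.Ioc (-(n : ℝ)) (n : ℝ), (deriv H x) ^ 2
          ≤ ∫ x in Set.Ioc (-(n : ℝ)) (n : ℝ), deriv H x := by
        apply setIntegral_mono_ae hH'sq_int.integrableOn (hH'on _ _)
        filter_upwards [haeQ] with ξ hξ
        nlinarith [hξ.1, hξ.2.1]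
      linarith [hHint n]
    have Ic : c ≤ 2*M := by
      apply integral_le_of_Ioc hU'sq_int
      intro n
      have step : ∫ x in Set.Ioc (-(n : ℝ)) (n : ℝ), (deriv U x) ^ 2
          ≤ ∫ x in Set.Ioc (-(n : ℝ)) (n : ℝ), deriv H x := by
        apply setIntegral_mono_ae hU'sq_int.integrableOn (hH'on _ _)
        filter_upwards [haeQ] with ξ hξ
        exact hξ.2.2.1
      linarith [hHint n]
    -- boundedness of U
    have hB : ∀ x, |U x| ≤ ((Ku : ℝ) + 1) * (a + 1) := by
      intro x
      have hK1 : (0:ℝ) < (Ku : ℝ) + 1 := by positivity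
      set cx : ℝ := |U x| with hcx_def
      have hcx0 : 0 ≤ cx := abs_nonneg _
      set δ : ℝ := cx / ((Ku : ℝ) + 1) with hδ_def
      have hδ0 : 0 ≤ δ := by positivity
      have hlow : ∀ t ∈ Set.Icc x (x + δ), (cx / ((Ku : ℝ) + 1)) ^ 2 ≤ (U t) ^ 2 := by
        intro t ht
        have hd := hUl.dist_le_mul t x
        rw [Real.dist_eq, Real.dist_eq] at hd
        have habs : |t - x| = t - x := abs_of_nonneg (by linarith [ht.1])
        rw [habs] at hd
        have h1 : cx / ((Ku : ℝ) + 1) ≤ |U t| := by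
          have h2 : |U x| - |U t| ≤ |U t - U x| := by
            rw [abs_sub_comm]
            exact abs_sub_abs_le_abs_sub _ _
          have h3 : |U t - U x| ≤ (Ku : ℝ) * δ := by
            refine hd.trans ?_
            have := ht.2
            have hKu0 : (0:ℝ) ≤ (Ku : ℝ) := Ku.coe_nonneg
            nlinarith [ht.1]
          have h4 : (Ku : ℝ) * δ = cx - cx / ((Ku : ℝ) + 1) := by
            rw [hδ_def]
            field_simp
            ring
          rw [h4] at h3
          linarith [h2, h3]
        calc (cx / ((Ku : ℝ) + 1)) ^ 2 ≤ |U t| ^ 2 := by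
              apply pow_le_pow_left₀ (by positivity) h1
          _ = (U t) ^ 2 := sq_abs _
      have hvol : ((volume : Measure ℝ) (Set.Icc x (x + δ))).toReal = δ := by
        rw [Real.volume_Icc]
        rw [ENNReal.toReal_ofReal (by linarith : (0:ℝ) ≤ x + δ - x)]
        ring
      have hineq := setIntegral_ge_of_const_le_real measurableSet_Icc
        (by rw [Real.volume_Icc]; exact ENNReal.ofReal_ne_top) hlow hUsq_int.integrableOn
      rw [measureReal_def, hvol] at hineq
      have h2 : ∫ t in Set.Icc x (x + δ), (U t) ^ 2 ≤ a :=
        setIntegral_le_integral hUsq_int (Eventually.of_forall fun t => sq_nonneg _)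
      have h3 : (cx / ((Ku : ℝ) + 1)) ^ 2 * δ ≤ a := le_trans hineq h2
      have h4 : cx ^ 3 ≤ ((Ku : ℝ) + 1) ^ 3 * a := by
        have h5 : (cx / ((Ku : ℝ) + 1)) ^ 2 * δ = cx ^ 3 / ((Ku : ℝ) + 1) ^ 3 := by
          rw [hδ_def]; field_simp
        rw [h5] at h3
        rw [div_le_iff₀ (by positivity)] at h3
        linarith [h3]
      have h6 : cx ^ 3 ≤ (((Ku : ℝ) + 1) * (a + 1)) ^ 3 := by
        have h7 : (0:ℝ) ≤ ((Ku : ℝ) + 1) ^ 3 := by positivity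
        nlinarith [h4, mul_nonneg h7 ha0, sq_nonneg a, mul_nonneg (mul_nonneg h7 ha0) ha0]
      exact le_of_pow_le_pow_left₀ (by norm_num) (by positivity) h6
    set B : ℝ := ((Ku : ℝ) + 1) * (a + 1) with hB_def
    have hB0 : 0 ≤ B := by positivity
    -- U^2 is Lipschitz
    have hU2l : LipschitzWith (Real.toNNReal ((Ku : ℝ) * (2 * B))) (fun x => (U x) ^ 2) := by
      apply LipschitzWith.of_dist_le_mul
      intro s t
      rw [Real.dist_eq, Real.dist_eq, Real.coe_toNNReal _ (by positivity)]
      have hd := hUl.dist_le_mul s t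
      rw [Real.dist_eq, Real.dist_eq] at hd
      have hfac : (U s) ^ 2 - (U t) ^ 2 = (U s - U t) * (U s + U t) := by ring
      calc |(U s) ^ 2 - (U t) ^ 2| = |U s - U t| * |U s + U t| := by rw [hfac, abs_mul]
        _ ≤ ((Ku : ℝ) * |s - t|) * (2 * B) := by
            apply mul_le_mul hd ?_ (abs_nonneg _) (by positivity)
            calc |U s + U t| ≤ |U s| + |U t| := abs_add_le _ _
              _ ≤ 2 * B := by linarith [hB s, hB t]
        _ = (Ku : ℝ) * (2 * B) * |s - t| := by ring
    -- the dominating function P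
    set P : ℝ → ℝ := fun z => (U z) ^ 2 / E + E * (deriv U z) ^ 2 with hP_def
    have hP_int : Integrable P := (hUsq_int.div_const E).add (hU'sq_int.const_mul E)
    have hJval : ∫ z, P z = a / E + E * c := by
      rw [hP_def, integral_add (hUsq_int.div_const E) (hU'sq_int.const_mul E),
        integral_div, integral_const_mul]
    have hP0 : ∀ z, 0 ≤ P z := fun z => by rw [hP_def]; positivity
    -- a.e. derivative of U^2
    have hdU2 : ∀ᵐ z ∂(volume : Measure ℝ),
        deriv (fun x => (U x) ^ 2) z = 2 * U z * deriv U z := by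
      filter_upwards [hUl.ae_differentiableAt (μ := volume)] with z hz
      have h := (hz.hasDerivAt.pow 2).deriv
      show deriv (U ^ 2) z = _
      rw [h]; norm_num
    -- pointwise bound on U^2
    have hSup : ∀ x, (U x) ^ 2 ≤ 2 * a / E + E * c := by
      intro x
      have hper : ∀ t ∈ Set.Icc (x - E) x, (U x) ^ 2 - (a / E + E * c) ≤ (U t) ^ 2 := by
        intro t ht
        have htx : t ≤ x := ht.2
        have hftc : ∫ z in Set.Ioc t x, deriv (fun x => (U x) ^ 2) z
            = (U x) ^ 2 - (U t) ^ 2 := lipschitz_integral_deriv hU2l htx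
        have hIntOn : IntegrableOn (deriv fun x => (U x) ^ 2) (Set.Ioc t x) := by
          apply Integrable.mono' hP_int.integrableOn
            ((measurable_deriv _).aestronglyMeasurable.restrict)
          apply ae_restrict_of_ae
          filter_upwards [hdU2] with z hz
          rw [Real.norm_eq_abs, hz]
          exact abs_two_mul_le hE
        have hmono : ∫ z in Set.Ioc t x, deriv (fun x => (U x) ^ 2) z
            ≤ ∫ z in Set.Ioc t x, P z := by
          apply setIntegral_mono_ae hIntOn hP_int.integrableOn
          filter_upwards [hdU2] with z hz
          rw [hz]
          exact le_trans (le_abs_self _) (abs_two_mul_le hE)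
        have hPle : ∫ z in Set.Ioc t x, P z ≤ a / E + E * c := by
          have hq := setIntegral_le_integral (s := Set.Ioc t x) hP_int
            (Eventually.of_forall hP0)
          rw [hJval] at hq
          exact hq
        linarith [hftc, hmono, hPle]
      have hvol : ((volume : Measure ℝ) (Set.Icc (x - E) x)).toReal = E := by
        rw [Real.volume_Icc]
        rw [ENNReal.toReal_ofReal (by linarith : (0:ℝ) ≤ x - (x - E))]
        ring
      have hineq := setIntegral_ge_of_const_le_real measurableSet_Icc
        (by rw [Real.volume_Icc]; exact ENNReal.ofReal_ne_top) hper hUsq_int.integrableOn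
      rw [measureReal_def, hvol] at hineq
      have h2 : ∫ t in Set.Icc (x - E) x, (U t) ^ 2 ≤ a :=
        setIntegral_le_integral hUsq_int (Eventually.of_forall fun t => sq_nonneg _)
      have h3 : ((U x) ^ 2 - (a / E + E * c)) * E ≤ a := le_trans hineq h2
      have hEne : E ≠ 0 := ne_of_gt hE
      have h4 : (a / E) * E = a := div_mul_cancel₀ _ hEne
      rw [sub_mul, add_mul, h4] at h3
      have h5 : (U x) ^ 2 * E ≤ 2 * a + E * c * E := by linarith [h3]
      have h6 : (U x) ^ 2 ≤ (2 * a + E * c * E) / E := (le_div_iff₀ hE).2 h5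
      calc (U x) ^ 2 ≤ (2 * a + E * c * E) / E := h6
        _ = 2 * a / E + E * c := by field_simp
    -- global bound on a
    have haM : a ≤ 2*M*E + 4*M^2*E^2 := by
      have hS0 : (0:ℝ) ≤ 2 * a / E + E * c := by positivity
      have hbound : ∀ n : ℕ, ∫ z in Set.Ioc (-(n : ℝ)) (n : ℝ), (U z) ^ 2
          ≤ 2*M*(1 + (2 * a / E + E * c)) := by
        intro n
        have step1 : ∫ z in Set.Ioc (-(n : ℝ)) (n : ℝ), (U z) ^ 2
            ≤ ∫ z in Set.Ioc (-(n : ℝ)) (n : ℝ),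
                (1 + (2 * a / E + E * c)) * deriv H z := by
          apply setIntegral_mono_ae hUsq_int.integrableOn ((hH'on _ _).const_mul _)
          filter_upwards [haeQ] with z hz
          calc (U z) ^ 2 ≤ (1 + (U z) ^ 2) * deriv H z := hz.2.2.2
            _ ≤ (1 + (2 * a / E + E * c)) * deriv H z := by
                apply mul_le_mul_of_nonneg_right (by linarith [hSup z]) hz.1
        have step2 : ∫ z in Set.Ioc (-(n : ℝ)) (n : ℝ),
            (1 + (2 * a / E + E * c)) * deriv H z
            = (1 + (2 * a / E + E * c)) * ∫ z in Set.Ioc (-(n : ℝ)) (n : ℝ), deriv H z :=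
          integral_const_mul _ _
        have step3 : (1 + (2 * a / E + E * c)) * (∫ z in Set.Ioc (-(n : ℝ)) (n : ℝ), deriv H z)
            ≤ (1 + (2 * a / E + E * c)) * (2*M) :=
          mul_le_mul_of_nonneg_left (hHint n) (by linarith)
        calc ∫ z in Set.Ioc (-(n : ℝ)) (n : ℝ), (U z) ^ 2
            ≤ (1 + (2 * a / E + E * c)) * (2*M) := by
              rw [step2] at step1; linarith [step1, step3]
          _ = 2*M*(1 + (2 * a / E + E * c)) := by ring
      have ha' : a ≤ 2*M*(1 + (2 * a / E + E * c)) := integral_le_of_Ioc hUsq_int hbound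
      have hEa : E * a ≤ E * (2*M*(1 + (2 * a / E + E * c))) :=
        mul_le_mul_of_nonneg_left ha' hE.le
      have hexp : E * (2*M*(1 + (2 * a / E + E * c))) = 2*M*E + 4*M*a + 2*M*E^2*c := by
        field_simp
        ring
      rw [hexp] at hEa
      have hcE : 2*M*E^2*c ≤ 2*M*E^2*(2*M) :=
        mul_le_mul_of_nonneg_left Ic (by positivity)
      rw [hE_def] at hEa hcE ⊢
      nlinarith [hEa, hcE, mul_nonneg hM ha0]
    -- assembling
    have hVH : Vnorm H ≤ M + (2*M) ^ (1/2 : ℝ) := by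
      unfold Vnorm
      have hs : (⨆ x : ℝ, |H x|) ≤ M := Real.iSup_le (fun x => hHM x) hM
      have hr : (∫ x : ℝ, (deriv H x) ^ 2) ^ (1/2 : ℝ) ≤ (2*M) ^ (1/2 : ℝ) :=
        Real.rpow_le_rpow (integral_nonneg fun x => sq_nonneg _) IH2 (by norm_num)
      linarith
    have hζ : Vnorm (fun x => y x - x) = Vnorm H := by
      have hfun : (fun x => y x - x) = fun x => -H x := funext fun x => by
        have := hsum x; linarith
      rw [hfun]
      unfold Vnorm
      have e1 : (⨆ x : ℝ, |-H x|) = ⨆ x : ℝ, |H x| := by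
        apply congrArg
        funext x
        exact abs_neg _
      have e2 : (∫ x : ℝ, (deriv (fun x => -H x) x) ^ 2) = ∫ x : ℝ, (deriv H x) ^ 2 := by
        apply congrArg
        funext x
        rw [deriv.fun_neg]
        ring
      rw [e1, e2]
    have hH1U : H1norm U ≤ (2*M*(8*M+1) + 4*M^2*(8*M+1)^2 + 2*M) ^ (1/2 : ℝ) := by
      unfold H1norm
      apply Real.rpow_le_rpow (integral_nonneg fun x => by positivity) ?_ (by norm_num)
      rw [integral_add hUsq_int hU'sq_int]
      rw [hE_def] at haM
      linarith [haM, Ic]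
    unfold Enorm
    rw [hζ]
    linarith [hVH, hH1U]
  · intro y U H hF0 hle ξ
    obtain ⟨-, -, -, ⟨Cy, hCy⟩, ⟨Ch, hCh⟩, -, -, -, -, -, -, -⟩ := hF0
    have hbdd : BddAbove (Set.range fun x => |H x|) :=
      ⟨Ch, by rintro v ⟨x, rfl⟩; exact hCh x⟩
    have h1 : |H ξ| ≤ ⨆ x : ℝ, |H x| := le_ciSup hbdd ξ
    have hζbdd : BddAbove (Set.range fun x => |y x - x|) :=
      ⟨Cy, by rintro v ⟨x, rfl⟩; exact hCy x⟩
    have h2 : (0:ℝ) ≤ ⨆ x : ℝ, |y x - x| :=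
      le_trans (abs_nonneg _) (le_ciSup hζbdd 0)
    have h3 : (0:ℝ) ≤ (∫ x : ℝ, (deriv (fun x => y x - x) x) ^ 2) ^ (1/2 : ℝ) :=
      Real.rpow_nonneg (integral_nonneg fun x => sq_nonneg _) _
    have h4 : (0:ℝ) ≤ H1norm U := by
      unfold H1norm
      exact Real.rpow_nonneg (integral_nonneg fun x => by positivity) _
    have h5 : (0:ℝ) ≤ (∫ x : ℝ, (deriv H x) ^ 2) ^ (1/2 : ℝ) :=
      Real.rpow_nonneg (integral_nonneg fun x => sq_nonneg _) _
    have hEn : Vnorm (fun x => y x - x) + H1norm U + Vnorm H ≤ M := hle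
    unfold Vnorm at hEn
    linarith [h1, h2, h3, h4, h5, hEn]
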